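/- Suppose y ↦ p(y|θ) is twice differentiable for each θ, the posterior θ ↦ p(θ|y_{1:t}) is a probability density, and differentiation under the integral sign is valid (dominated by integrable functions h_{1,t}, h_{2,t}). Then for the predictive density p(y_t|y_{1:t-1}) = ∫ p(y_t|θ) p(θ|y_{1:t-1}) dθ, one has (d/dy_t) log p(y_t|y_{1:t-1}) = E_t[(d/dy_t) log p(y_t|θ)], where E_t denotes expectation over θ ~ p(dθ|y_{1:t}) (the posterior including y_t). -/

import Mathlib

open MeasureTheory Real Filter Metric

/-- Fisher-type identity for Bayesian predictive densities: the derivative of the log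
predictive density equals the posterior expectation of the derivative of the
log-likelihood, where the posterior includes the current observation. -/
theorem deriv_log_predictive_eq_posterior_expectation
    {Θ : Type*} [MeasurableSpace Θ] (ν : Measure Θ) [SigmaFinite ν]
    (prior : Θ → ℝ) (f : ℝ → Θ → ℝ)
    (hprior_nonneg : ∀ θ, 0 ≤ prior θ) (hprior_prob : ∫ θ, prior θ ∂ν = 1)
    (hf_pos : ∀ y θ, 0 < f y θ)
    (hf_smooth : ∀ θ, ContDiff ℝ 2 (fun y => f y θ))
    (hf_int : ∀ y, Integrable (fun θ => f y θ * prior θ) ν)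
    (h1 h2 : Θ → ℝ) (h1_int : Integrable h1 ν) (h2_int : Integrable h2 ν)
    (hdom1 : ∀ y θ, |prior θ * deriv (fun z => f z θ) y| ≤ h1 θ)
    (hdom2 : ∀ y θ, |prior θ * deriv (deriv (fun z => f z θ)) y| ≤ h2 θ)
    (y₀ : ℝ) :
    deriv (fun y => Real.log (∫ θ, f y θ * prior θ ∂ν)) y₀ =
      ∫ θ, deriv (fun y => Real.log (f y θ)) y₀ *
        (f y₀ θ * prior θ / ∫ θ', f y₀ θ' * prior θ' ∂ν) ∂ν := by
  -- differentiability of f in y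
  have hdiff : ∀ θ y, HasDerivAt (fun z => f z θ) (deriv (fun z => f z θ) y) y := by
    intro θ y
    exact (((hf_smooth θ).differentiable (by norm_num)) y).hasDerivAt
  -- the integral Z is positive
  set Z : ℝ := ∫ θ, f y₀ θ * prior θ ∂ν with hZ
  have hZpos : 0 < Z := by
    rcases eq_or_lt_of_le (integral_nonneg (f := fun θ => f y₀ θ * prior θ) (fun θ => mul_nonneg (hf_pos y₀ θ).le (hprior_nonneg θ))) with h | h
    · exfalso
      have h0 : (fun θ => f y₀ θ * prior θ) =ᵐ[ν] 0 := by
        rw [← MeasureTheory.integral_eq_zero_iff_of_nonneg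
          (fun θ => mul_nonneg (hf_pos y₀ θ).le (hprior_nonneg θ)) (hf_int y₀)]
        exact h.symm
      have hp0 : prior =ᵐ[ν] 0 := by
        filter_upwards [h0] with θ hθ
        have := (hf_pos y₀ θ).ne'
        simpa [this] using hθ
      have : ∫ θ, prior θ ∂ν = 0 := by
        rw [integral_congr_ae hp0]; simp
      rw [hprior_prob] at this; norm_num at this
    · exact h
  -- derivative of the predictive density
  set F' : ℝ → Θ → ℝ := fun y θ => deriv (fun z => f z θ) y * prior θ with hF'
  have hF'meas : AEStronglyMeasurable (F' y₀) ν := by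
    apply aestronglyMeasurable_of_tendsto_ae (u := atTop)
      (f := fun (n : ℕ) θ => ((n : ℝ)+1) * (f (y₀ + 1/(n+1)) θ * prior θ - f y₀ θ * prior θ))
    · intro n
      exact ((hf_int (y₀ + 1/(n+1))).sub (hf_int y₀)).aestronglyMeasurable.const_mul _
    · refine Eventually.of_forall fun θ => ?_
      have hd : HasDerivAt (fun y => f y θ * prior θ) (F' y₀ θ) y₀ :=
        (hdiff θ y₀).mul_const _
      have hslope := hasDerivAt_iff_tendsto_slope.mp hd
      have hne : ∀ n : ℕ, y₀ + 1/(n+1 : ℝ) ≠ y₀ := by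
        intro n h
        have h0 : (0:ℝ) < 1/(n+1 : ℝ) := by positivity
        nlinarith [h0]
      have hseq : Tendsto (fun n : ℕ => y₀ + 1/(n+1 : ℝ)) atTop (nhdsWithin y₀ {y₀}ᶜ) := by
        apply tendsto_nhdsWithin_of_tendsto_nhds_of_eventually_within
        · simpa using (tendsto_const_nhds (x := y₀)).add tendsto_one_div_add_atTop_nhds_zero_nat
        · exact Eventually.of_forall fun n => hne n
      have hcomp := hslope.comp hseq
      refine Tendsto.congr (fun n => ?_) hcomp
      show slope (fun y => f y θ * prior θ) y₀ (y₀ + 1/(n+1 : ℝ)) = _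
      rw [slope_def_field]
      have hpos : ((n:ℝ)+1) ≠ 0 := by positivity
      field_simp
      ring
  have hderivZ : Integrable (F' y₀) ν ∧
      HasDerivAt (fun y => ∫ θ, f y θ * prior θ ∂ν) (∫ θ, F' y₀ θ ∂ν) y₀ := by
    apply hasDerivAt_integral_of_dominated_loc_of_deriv_le (bound := h1) (s := ball y₀ 1)
      (ball_mem_nhds y₀ one_pos)
    · exact Eventually.of_forall fun y => (hf_int y).aestronglyMeasurable
    · exact hf_int y₀
    · exact hF'meas
    · refine Eventually.of_forall fun θ => fun y _ => ?_
      have := hdom1 y θ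
      rw [Real.norm_eq_abs]
      calc |F' y θ| = |prior θ * deriv (fun z => f z θ) y| := by rw [abs_mul, abs_mul]; ring
        _ ≤ h1 θ := hdom1 y θ
    · exact h1_int
    · refine Eventually.of_forall fun θ => fun y _ => ?_
      exact (hdiff θ y).mul_const _
  -- LHS
  have hZne : Z ≠ 0 := hZpos.ne'
  have hlog : HasDerivAt (fun y => Real.log (∫ θ, f y θ * prior θ ∂ν))
      ((∫ θ, F' y₀ θ ∂ν) / Z) y₀ := hderivZ.2.log hZne
  rw [hlog.deriv]
  -- RHS integrand simplification
  have hRHS : ∀ θ, deriv (fun y => Real.log (f y θ)) y₀ *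
      (f y₀ θ * prior θ / Z) = F' y₀ θ / Z := by
    intro θ
    have hld : HasDerivAt (fun y => Real.log (f y θ))
        (deriv (fun z => f z θ) y₀ / f y₀ θ) y₀ := (hdiff θ y₀).log (hf_pos y₀ θ).ne'
    rw [hld.deriv]
    have hfne := (hf_pos y₀ θ).ne'
    field_simp [hF']
    ring
  calc (∫ θ, F' y₀ θ ∂ν) / Z = ∫ θ, F' y₀ θ / Z ∂ν := by
        rw [integral_div]
    _ = _ := by
        refine integral_congr_ae (Eventually.of_forall fun θ => ?_)
        exact (hRHS θ).symm
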